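/- Under the setting of the previous statement, the estimation error of the noisy demographic parity satisfies the exact identity | |h̃ - h̃'| - |h - h'| | = |h - h'|·(e1 + e2) whenever e1 + e2 ≤ 1, where e1 = P(A=1|Ã=2) and e2 = P(A=2|Ã=1). -/

import Mathlib

open MeasureTheory

/-- Conditional probability `P(s | t)` as a real number. -/
noncomputable def condP {Ω : Type*} [MeasurableSpace Ω] (μ : Measure Ω) (s t : Set Ω) : ℝ :=
  (μ (s ∩ t)).toReal / (μ t).toReal

/-- exact identity for the DP estimation error in the binary case
whenever `e1 + e2 ≤ 1`. -/
theorem stmt1 {Ω : Type*} [MeasurableSpace Ω] (μ : Measure Ω) [IsProbabilityMeasure μ]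
    (A Atil fX : Ω → Fin 2)
    (hA : Measurable A) (hAt : Measurable Atil) (hf : Measurable fX)
    (hposA : ∀ a : Fin 2, 0 < μ (A ⁻¹' {a}))
    (hposAt : ∀ b : Fin 2, 0 < μ (Atil ⁻¹' {b}))
    (hposfA : ∀ k a : Fin 2, 0 < μ (fX ⁻¹' {k} ∩ A ⁻¹' {a}))
    (hci : ∀ a b k : Fin 2,
      condP μ (Atil ⁻¹' {b}) (fX ⁻¹' {k} ∩ A ⁻¹' {a}) = condP μ (Atil ⁻¹' {b}) (A ⁻¹' {a}))
    (e1 e2 h h' ht ht' : ℝ)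
    (he1 : e1 = condP μ (A ⁻¹' {0}) (Atil ⁻¹' {1}))
    (he2 : e2 = condP μ (A ⁻¹' {1}) (Atil ⁻¹' {0}))
    (hh : h = condP μ (fX ⁻¹' {0}) (A ⁻¹' {0}))
    (hh' : h' = condP μ (fX ⁻¹' {0}) (A ⁻¹' {1}))
    (hht : ht = condP μ (fX ⁻¹' {0}) (Atil ⁻¹' {0}))
    (hht' : ht' = condP μ (fX ⁻¹' {0}) (Atil ⁻¹' {1})) :
    e1 + e2 ≤ 1 →
    abs (abs (ht - ht') - abs (h - h')) = |h - h'| * (e1 + e2) := by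
  intro hle
  classical
  have fin2 : ∀ i : Fin 2, i = 0 ∨ i = 1 := by decide
  -- real-valued measure
  set m : Set Ω → ℝ := fun s => (μ s).toReal with hm
  have hsplit : ∀ s : Set Ω, m s = m (s ∩ A ⁻¹' {0}) + m (s ∩ A ⁻¹' {1}) := by
    intro s
    have h1 : s ∩ A ⁻¹' ({1} : Set (Fin 2)) = s \ A ⁻¹' {0} := by
      ext x
      simp only [Set.mem_inter_iff, Set.mem_diff, Set.mem_preimage, Set.mem_singleton_iff]
      constructor
      · rintro ⟨hx, h1⟩; exact ⟨hx, by simp [h1]⟩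
      · rintro ⟨hx, h0⟩
        rcases fin2 (A x) with h | h
        · exact absurd h h0
        · exact ⟨hx, h⟩
    have h2 : μ (s ∩ A ⁻¹' {0}) + μ (s \ A ⁻¹' {0}) = μ s :=
      measure_inter_add_diff s (hA (measurableSet_singleton 0))
    rw [h1]
    simp only [hm]
    rw [← ENNReal.toReal_add (measure_ne_top μ _) (measure_ne_top μ _), h2]
  -- positivity helper
  have hpos : ∀ s : Set Ω, 0 < μ s → 0 < m s := fun s hs =>
    ENNReal.toReal_pos (ne_of_gt hs) (measure_ne_top μ s)
  -- named quantities
  set pA0 := m (A ⁻¹' {0}) with hpA0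
  set pA1 := m (A ⁻¹' {1}) with hpA1
  set pT0 := m (Atil ⁻¹' {0}) with hpT0
  set pT1 := m (Atil ⁻¹' {1}) with hpT1
  set f0 := m (fX ⁻¹' {0} ∩ A ⁻¹' {0}) with hf0
  set f1 := m (fX ⁻¹' {0} ∩ A ⁻¹' {1}) with hf1
  have hpA0p : 0 < pA0 := hpos _ (hposA 0)
  have hpA1p : 0 < pA1 := hpos _ (hposA 1)
  have hpT0p : 0 < pT0 := hpos _ (hposAt 0)
  have hpT1p : 0 < pT1 := hpos _ (hposAt 1)
  have hf0p : 0 < f0 := hpos _ (hposfA 0 0)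
  have hf1p : 0 < f1 := hpos _ (hposfA 0 1)
  -- joint of A and Atil
  set j00 := m (Atil ⁻¹' {0} ∩ A ⁻¹' {0}) with hj00
  set j10 := m (Atil ⁻¹' {0} ∩ A ⁻¹' {1}) with hj10
  set j01 := m (Atil ⁻¹' {1} ∩ A ⁻¹' {0}) with hj01
  set j11 := m (Atil ⁻¹' {1} ∩ A ⁻¹' {1}) with hj11
  -- conditional independence consequences
  have hciR : ∀ a b : Fin 2,
      m (Atil ⁻¹' {b} ∩ (fX ⁻¹' {0} ∩ A ⁻¹' {a})) / m (fX ⁻¹' {0} ∩ A ⁻¹' {a})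
        = m (Atil ⁻¹' {b} ∩ A ⁻¹' {a}) / m (A ⁻¹' {a}) := fun a b => hci a b 0
  -- split of fX⁻¹{0} ∩ Atil⁻¹{b} over A
  have hsetT : ∀ (b a : Fin 2), (fX ⁻¹' {0} ∩ Atil ⁻¹' {b}) ∩ A ⁻¹' {a}
      = Atil ⁻¹' {b} ∩ (fX ⁻¹' {0} ∩ A ⁻¹' {a}) := by
    intro b a; ext x; simp only [Set.mem_inter_iff]; tauto
  have hsplitT : ∀ b : Fin 2, m (fX ⁻¹' {0} ∩ Atil ⁻¹' {b})
      = m (Atil ⁻¹' {b} ∩ (fX ⁻¹' {0} ∩ A ⁻¹' {0}))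
        + m (Atil ⁻¹' {b} ∩ (fX ⁻¹' {0} ∩ A ⁻¹' {1})) := by
    intro b
    rw [hsplit (fX ⁻¹' {0} ∩ Atil ⁻¹' {b}), hsetT b 0, hsetT b 1]
  -- split of Atil fibers over A
  have hsplitAt0 : pT0 = j00 + j10 := hsplit (Atil ⁻¹' {0})
  have hsplitAt1 : pT1 = j01 + j11 := hsplit (Atil ⁻¹' {1})
  -- triple intersections from CI
  have ht00 : m (Atil ⁻¹' {0} ∩ (fX ⁻¹' {0} ∩ A ⁻¹' {0})) = j00 * f0 / pA0 := by
    have := hciR 0 0; change _ / f0 = j00 / pA0 at this; field_simp at this ⊢; try linarith [this]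
  have ht10 : m (Atil ⁻¹' {0} ∩ (fX ⁻¹' {0} ∩ A ⁻¹' {1})) = j10 * f1 / pA1 := by
    have := hciR 1 0; change _ / f1 = j10 / pA1 at this; field_simp at this ⊢; try linarith [this]
  have ht01 : m (Atil ⁻¹' {1} ∩ (fX ⁻¹' {0} ∩ A ⁻¹' {0})) = j01 * f0 / pA0 := by
    have := hciR 0 1; change _ / f0 = j01 / pA0 at this; field_simp at this ⊢; try linarith [this]
  have ht11 : m (Atil ⁻¹' {1} ∩ (fX ⁻¹' {0} ∩ A ⁻¹' {1})) = j11 * f1 / pA1 := by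
    have := hciR 1 1; change _ / f1 = j11 / pA1 at this; field_simp at this ⊢; try linarith [this]
  -- rewrite definitions
  have hhE : h = f0 / pA0 := hh
  have hh'E : h' = f1 / pA1 := hh'
  have he1E : e1 = j01 / pT1 := by
    rw [he1]; unfold condP; rw [Set.inter_comm]
  have he2E : e2 = j10 / pT0 := by
    rw [he2]; unfold condP; rw [Set.inter_comm]
  have htE : ht = (j00 * f0 / pA0 + j10 * f1 / pA1) / pT0 := by
    rw [hht]; unfold condP
    show m (fX ⁻¹' {0} ∩ Atil ⁻¹' {0}) / pT0 = _
    rw [hsplitT 0, ht00, ht10]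
  have ht'E : ht' = (j01 * f0 / pA0 + j11 * f1 / pA1) / pT1 := by
    rw [hht']; unfold condP
    show m (fX ⁻¹' {0} ∩ Atil ⁻¹' {1}) / pT1 = _
    rw [hsplitT 1, ht01, ht11]
  -- key identity: ht - ht' = (h - h') * (1 - e1 - e2)
  have key : ht - ht' = (h - h') * (1 - e1 - e2) := by
    rw [htE, ht'E, hhE, hh'E, he1E, he2E]
    have h00 : j00 = pT0 - j10 := by linarith
    have h11 : j11 = pT1 - j01 := by linarith
    rw [h00, h11]
    field_simp
    ring
  -- nonnegativity of e1, e2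
  have hj01nn : 0 ≤ j01 := ENNReal.toReal_nonneg
  have hj10nn : 0 ≤ j10 := ENNReal.toReal_nonneg
  have he1nn : 0 ≤ e1 := by rw [he1E]; positivity
  have he2nn : 0 ≤ e2 := by rw [he2E]; positivity
  -- final computation
  have h1k : 0 ≤ 1 - e1 - e2 := by linarith
  rw [key, abs_mul, abs_of_nonneg h1k]
  rw [show |h - h'| * (1 - e1 - e2) - |h - h'| = -(|h - h'| * (e1 + e2)) by ring]
  rw [abs_neg, abs_of_nonneg (by positivity)]
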